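/- arXiv:1703.04963 — 6 statements merged into one kernel-verified Lean document; each statement's English description precedes it below -/
import Mathlib

section
/- Let r ≥ 1, let E be a finite set, and let v : E → ℝ^r be a family of vectors. For any tuples λ = (λ_1, …, λ_r) ∈ E^r and μ = (μ_1, …, μ_r) ∈ E^r, the Grassmann–Plücker relation holds: det(v_{λ_1}, …, v_{λ_r}) · det(v_{μ_1}, …, v_{μ_r}) = Σ_{s=1}^{r} det(v_{μ_s}, v_{λ_2}, …, v_{λ_r}) · det(v_{μ_1}, …, v_{μ_{s-1}}, v_{λ_1}, v_{μ_{s+1}}, …, v_{μ_r}). -/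
open Matrix

private lemma gp_updateRow_updateRow_same {r : ℕ} (M : Matrix (Fin r) (Fin r) ℝ)
    (i : Fin r) (a b : Fin r → ℝ) :
    (M.updateRow i a).updateRow i b = M.updateRow i b := by
  ext u k
  by_cases h : u = i <;> simp [Matrix.updateRow_apply, h]

private lemma gp_updateRow_comm {r : ℕ} (M : Matrix (Fin r) (Fin r) ℝ)
    {i j : Fin r} (h : i ≠ j) (a b : Fin r → ℝ) :
    (M.updateRow i a).updateRow j b = (M.updateRow j b).updateRow i a := by
  ext u k
  by_cases h1 : u = i <;> by_cases h2 : u = j <;>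
    simp_all [Matrix.updateRow_apply]

/-- Degenerate case: two of the `b` rows coincide. -/
private lemma gp_case_rep {r : ℕ} (A : Matrix (Fin r) (Fin r) ℝ) (z : Fin r)
    (b : Fin r → Fin r → ℝ) (w : Fin r → ℝ) {s t : Fin r} (hst : s ≠ t) (hb : b s = b t) :
    det (A.updateRow z w) * det (Matrix.of b) =
      ∑ u : Fin r, det (A.updateRow z (b u)) * det ((Matrix.of b).updateRow u w) := by
  have h0 : det (Matrix.of b) = 0 := det_zero_of_row_eq hst hb
  have key : ∀ u : Fin r, u ≠ s → u ≠ t → det ((Matrix.of b).updateRow u w) = 0 := by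
    intro u hus hut
    refine det_zero_of_row_eq hst ?_
    rw [Matrix.updateRow_ne (Ne.symm hus), Matrix.updateRow_ne (Ne.symm hut)]
    exact hb
  have hswap : det ((Matrix.of b).updateRow s w) = - det ((Matrix.of b).updateRow t w) := by
    have hmat : (Matrix.of b).updateRow s w
        = ((Matrix.of b).updateRow t w).submatrix (Equiv.swap s t) id := by
      ext i k
      by_cases his : i = s
      · subst his
        simp [Matrix.updateRow_apply, Equiv.swap_apply_left, hst]
      · by_cases hit : i = t
        · subst hit
          simp [Matrix.updateRow_apply, Equiv.swap_apply_right, his, hst, hb]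
        · simp [Matrix.updateRow_apply, Equiv.swap_apply_of_ne_of_ne his hit, his, hit]
    rw [hmat, det_permute, Equiv.Perm.sign_swap hst]
    push_cast
    ring
  rw [h0, mul_zero]
  have hsum : ∑ u ∈ ({s, t} : Finset (Fin r)),
      det (A.updateRow z (b u)) * det ((Matrix.of b).updateRow u w)
      = ∑ u : Fin r, det (A.updateRow z (b u)) * det ((Matrix.of b).updateRow u w) := by
    refine Finset.sum_subset (Finset.subset_univ _) ?_
    intro u _ hu
    simp only [Finset.mem_insert, Finset.mem_singleton, not_or] at hu
    rw [key u hu.1 hu.2, mul_zero]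
  rw [← hsum, Finset.sum_pair hst, hb, hswap]
  ring

/-- Nondegenerate case: `w` is one of the `b` rows. -/
private lemma gp_case_eq {r : ℕ} (A : Matrix (Fin r) (Fin r) ℝ) (z : Fin r)
    (b : Fin r → Fin r → ℝ) (w : Fin r → ℝ) (t : Fin r) (ht : b t = w) :
    det (A.updateRow z w) * det (Matrix.of b) =
      ∑ u : Fin r, det (A.updateRow z (b u)) * det ((Matrix.of b).updateRow u w) := by
  rw [Finset.sum_eq_single t]
  · subst ht
    rw [show (Matrix.of b).updateRow t (b t) = Matrix.of b from Matrix.updateRow_eq_self _ _]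
  · intro u _ hut
    have : det ((Matrix.of b).updateRow u w) = 0 := by
      refine det_zero_of_row_eq hut ?_
      rw [Matrix.updateRow_self, Matrix.updateRow_ne (Ne.symm hut)]
      exact ht.symm
    rw [this, mul_zero]
  · intro h
    exact absurd (Finset.mem_univ t) h

private lemma gp_aux {r : ℕ} (A : Matrix (Fin r) (Fin r) ℝ) (z : Fin r)
    (w : Fin r → ℝ) (b : Fin r → Fin r → ℝ) :
    det (A.updateRow z w) * det (Matrix.of b) =
      ∑ s : Fin r, det (A.updateRow z (b s)) * det ((Matrix.of b).updateRow s w) := by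
  classical
  have hB0 : ∀ (x : Fin (r+1) → Fin r → ℝ) (t : Fin r → ℝ),
      (Matrix.of fun s : Fin r => Function.update x 0 t s.succ) = Matrix.of fun s => x s.succ := by
    intro x t; ext s j
    simp [Function.update_of_ne (Fin.succ_ne_zero s)]
  have hBsucc : ∀ (x : Fin (r+1) → Fin r → ℝ) (j : Fin r) (t : Fin r → ℝ),
      (Matrix.of fun s : Fin r => Function.update x j.succ t s.succ)
        = (Matrix.of fun s : Fin r => x s.succ).updateRow j t := by
    intro x j t; ext s i
    by_cases h : s = j
    · subst h; simp
    · simp [Function.update_of_ne (fun hh => h (Fin.succ_injective _ hh)),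
        Matrix.updateRow_ne h]
  let f : MultilinearMap ℝ (fun _ : Fin (r+1) => (Fin r → ℝ)) ℝ :=
  { toFun := fun x => det (A.updateRow z (x 0)) * det (Matrix.of fun s : Fin r => x s.succ)
    map_update_add' := by
      intro dec x i a c
      obtain rfl : dec = instDecidableEqFin (r+1) := Subsingleton.elim _ _
      induction i using Fin.cases with
      | zero => simp [hB0, det_updateRow_add, add_mul]
      | succ j =>
        simp [Function.update_of_ne (Fin.succ_ne_zero j).symm, hBsucc,
          det_updateRow_add, mul_add]
    map_update_smul' := by
      intro dec x i c a
      obtain rfl : dec = instDecidableEqFin (r+1) := Subsingleton.elim _ _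
      induction i using Fin.cases with
      | zero =>
        simp only [Function.update_self, hB0, det_updateRow_smul, smul_eq_mul]
        ring
      | succ j =>
        simp only [Function.update_of_ne (Fin.succ_ne_zero j).symm, hBsucc,
          det_updateRow_smul, smul_eq_mul]
        ring }
  let g : MultilinearMap ℝ (fun _ : Fin (r+1) => (Fin r → ℝ)) ℝ :=
  { toFun := fun x => ∑ s : Fin r, det (A.updateRow z (x s.succ)) *
      det ((Matrix.of fun u : Fin r => x u.succ).updateRow s (x 0))
    map_update_add' := by
      intro dec x i a c
      obtain rfl : dec = instDecidableEqFin (r+1) := Subsingleton.elim _ _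
      induction i using Fin.cases with
      | zero =>
        rw [← Finset.sum_add_distrib]
        refine Finset.sum_congr rfl fun s _ => ?_
        simp [hB0, Function.update_of_ne (Fin.succ_ne_zero s), det_updateRow_add, mul_add]
      | succ j =>
        rw [← Finset.sum_add_distrib]
        refine Finset.sum_congr rfl fun s _ => ?_
        by_cases hs : s = j
        · subst hs
          simp only [Function.update_self, hBsucc,
            Function.update_of_ne (Fin.succ_ne_zero s).symm,
            gp_updateRow_updateRow_same, det_updateRow_add, add_mul]
        · have hne : s.succ ≠ j.succ := fun hh => hs (Fin.succ_injective _ hh)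
          simp only [Function.update_of_ne hne, hBsucc,
            Function.update_of_ne (Fin.succ_ne_zero j).symm,
            gp_updateRow_comm _ (fun h => hs (h.symm ▸ rfl) : (j : Fin r) ≠ s) ,
            det_updateRow_add, mul_add]
    map_update_smul' := by
      intro dec x i c a
      obtain rfl : dec = instDecidableEqFin (r+1) := Subsingleton.elim _ _
      induction i using Fin.cases with
      | zero =>
        rw [Finset.smul_sum]
        refine Finset.sum_congr rfl fun s _ => ?_
        simp only [hB0, Function.update_self, Function.update_of_ne (Fin.succ_ne_zero s),
          det_updateRow_smul, smul_eq_mul]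
        ring
      | succ j =>
        rw [Finset.smul_sum]
        refine Finset.sum_congr rfl fun s _ => ?_
        by_cases hs : s = j
        · subst hs
          simp only [Function.update_self, hBsucc,
            Function.update_of_ne (Fin.succ_ne_zero s).symm,
            gp_updateRow_updateRow_same, det_updateRow_smul, smul_eq_mul]
          ring
        · have hne : s.succ ≠ j.succ := fun hh => hs (Fin.succ_injective _ hh)
          simp only [Function.update_of_ne hne, hBsucc,
            Function.update_of_ne (Fin.succ_ne_zero j).symm,
            gp_updateRow_comm _ (fun h => hs (h.symm ▸ rfl) : (j : Fin r) ≠ s),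
            det_updateRow_smul, smul_eq_mul]
          ring
  }
  have hfg : f = g := by
    refine Module.Basis.ext_multilinear (fun _ => Pi.basisFun ℝ (Fin r)) fun k => ?_
    simp only [f, g, MultilinearMap.coe_mk]
    by_cases hinj : Function.Injective fun s : Fin r => k s.succ
    · obtain ⟨t, ht⟩ := (Finite.injective_iff_surjective.mp hinj) (k 0)
      exact gp_case_eq A z (fun s => (Pi.basisFun ℝ (Fin r)) (k s.succ)) _ t
        (congrArg _ ht)
    · obtain ⟨s, t, h1, h2⟩ := Function.not_injective_iff.mp hinj
      exact gp_case_rep A z (fun u => (Pi.basisFun ℝ (Fin r)) (k u.succ)) _ h2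
        (congrArg _ h1)
  have hx := DFunLike.congr_fun hfg (Fin.cons w b)
  simpa [f, g, Fin.cons_zero, Fin.cons_succ] using hx

/-- **Grassmann–Plücker relation.** For a family `v : E → ℝ^r` of vectors and tuples
`lam, mu : Fin r → E`,
`det(v_{λ₁},…,v_{λ_r}) · det(v_{μ₁},…,v_{μ_r})
  = Σ_s det(v_{μ_s},v_{λ₂},…,v_{λ_r}) · det(v_{μ₁},…,v_{λ₁},…,v_{μ_r})`. -/
theorem grassmann_plucker (r : ℕ) (hr : 1 ≤ r) (E : Type*) [Fintype E]
    (v : E → Fin r → ℝ) (lam mu : Fin r → E) :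
    Matrix.det (Matrix.of fun i => v (lam i)) * Matrix.det (Matrix.of fun i => v (mu i)) =
      ∑ s : Fin r,
        Matrix.det (Matrix.of fun i => v (Function.update lam ⟨0, hr⟩ (mu s) i)) *
          Matrix.det (Matrix.of fun i => v (Function.update mu s (lam ⟨0, hr⟩) i)) := by
  classical
  have e1 : ∀ s : Fin r, (Matrix.of fun i => v (Function.update lam ⟨0, hr⟩ (mu s) i))
      = (Matrix.of fun i => v (lam i)).updateRow ⟨0, hr⟩ (v (mu s)) := by
    intro s; ext i j
    by_cases h : i = ⟨0, hr⟩ <;> simp [Function.update_apply, Matrix.updateRow_apply, h]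
  have e2 : ∀ s : Fin r, (Matrix.of fun i => v (Function.update mu s (lam ⟨0, hr⟩) i))
      = (Matrix.of fun i => v (mu i)).updateRow s (v (lam ⟨0, hr⟩)) := by
    intro s; ext i j
    by_cases h : i = s <;> simp [Function.update_apply, Matrix.updateRow_apply, h]
  have hA : (Matrix.of fun i => v (lam i)).updateRow ⟨0, hr⟩ (v (lam ⟨0, hr⟩))
      = Matrix.of fun i => v (lam i) := Matrix.updateRow_eq_self _ _
  have := gp_aux (Matrix.of fun i => v (lam i)) ⟨0, hr⟩ (v (lam ⟨0, hr⟩))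
    (fun s => v (mu s))
  rw [hA] at this
  simp only [e1, e2]
  exact this
end

section
/- Fix an integer k ≥ 1. Let p_1, …, p_{k+2} be points in ℝ² with coordinates p_i = (x_i, y_i) and x_1 < x_2 < … < x_{k+1} (x_{k+2} arbitrary). Let L be the Lagrange interpolation polynomial of (x_i, y_i), i = 1, …, k+1, and let f : ℝ² → ℝ^{k+2} be the map f(x, y) = (1, x, x², …, x^k, y). Then sign(y_{k+2} − L(x_{k+2})) = sign(det(f(p_1), …, f(p_{k+2}))), where the determinant is that of the (k+2)×(k+2) matrix whose i-th row is f(p_i). -/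
/-- For points `p₁,…,p_{k+2}` in `ℝ²` with `x₁ < … < x_{k+1}` (`x_{k+2}` arbitrary), letting `L`
be the Lagrange interpolation polynomial of the first `k+1` points and
`f(x,y) = (1, x, …, x^k, y)`, we have
`sign(y_{k+2} − L(x_{k+2})) = sign(det(f(p₁),…,f(p_{k+2})))`. -/
theorem sign_lagrange_defect_eq_sign_det (k : ℕ) (hk : 1 ≤ k)
    (p : Fin (k + 2) → ℝ × ℝ)
    (hp : StrictMono fun i : Fin (k + 1) => (p i.castSucc).1)
    (f : ℝ × ℝ → Fin (k + 2) → ℝ)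
    (hf : ∀ q : ℝ × ℝ, ∀ j : Fin (k + 2),
      f q j = if (j : ℕ) = k + 1 then q.2 else q.1 ^ (j : ℕ))
    (L : Polynomial ℝ)
    (hL : L = Lagrange.interpolate (Finset.univ : Finset (Fin (k + 1)))
        (fun i => (p i.castSucc).1) (fun i => (p i.castSucc).2)) :
    Real.sign ((p (Fin.last (k + 1))).2 - L.eval ((p (Fin.last (k + 1))).1)) =
      Real.sign (Matrix.det (Matrix.of fun i => f (p i))) := by
  classical
  set x : Fin (k + 2) → ℝ := fun i => (p i).1 with hxdef
  set y : Fin (k + 2) → ℝ := fun i => (p i).2 with hydef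
  have hxinj : Function.Injective (fun i : Fin (k + 1) => x i.castSucc) := hp.injective
  have hnode : ∀ i : Fin (k + 1), L.eval (x i.castSucc) = y i.castSucc := by
    intro i
    rw [hL]
    exact Lagrange.eval_interpolate_at_node _ (Set.injOn_of_injective hxinj)
      (Finset.mem_univ i)
  have hdeg : L.natDegree < k + 1 := by
    by_cases h0 : L = 0
    · simp [h0]
    · have hdlt : L.degree < ((Finset.univ : Finset (Fin (k + 1))).card : ℕ) := by
        rw [hL]
        exact Lagrange.degree_interpolate_lt _ (Set.injOn_of_injective hxinj)
      rw [Finset.card_univ, Fintype.card_fin] at hdlt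
      exact (Polynomial.natDegree_lt_iff_degree_lt h0).mpr (by exact_mod_cast hdlt)
  have heval : ∀ t : ℝ, L.eval t = ∑ j ∈ Finset.range (k + 1), L.coeff j * t ^ j :=
    fun t => Polynomial.eval_eq_sum_range' hdeg t
  -- the matrices
  set M : Matrix (Fin (k + 2)) (Fin (k + 2)) ℝ := Matrix.of fun i => f (p i) with hM
  set M' : Matrix (Fin (k + 2)) (Fin (k + 2)) ℝ := Matrix.of fun i j =>
    if (j : ℕ) = k + 1 then y i - L.eval (x i) else x i ^ (j : ℕ) with hM'
  set T : Matrix (Fin (k + 2)) (Fin (k + 2)) ℝ := Matrix.of fun j l =>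
    if j = l then 1 else if (l : ℕ) = k + 1 then L.coeff j else 0 with hT
  have hTdet : T.det = 1 := by
    have htri : T.BlockTriangular id := by
      intro j l hlt
      have hne : j ≠ l := by intro h; subst h; exact lt_irrefl _ hlt
      have hlk : (l : ℕ) ≠ k + 1 := by
        have hj := j.isLt
        have hx2 : (l : ℕ) < (j : ℕ) := hlt
        omega
      simp [hT, hne, hlk]
    rw [Matrix.det_of_upperTriangular htri]
    simp [hT]
  have hMM : M = M' * T := by
    ext i l
    rw [Matrix.mul_apply]
    by_cases hl : (l : ℕ) = k + 1
    · have hlast : l = Fin.last (k + 1) := by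
        apply Fin.ext; simpa using hl
      rw [Fin.sum_univ_castSucc]
      have h1 : ∀ j : Fin (k + 1), M' i j.castSucc * T j.castSucc l
          = x i ^ (j : ℕ) * L.coeff j := by
        intro j
        have hjne : j.castSucc ≠ l := by
          rw [hlast]; exact (Fin.castSucc_lt_last j).ne
        have hjk : (j : ℕ) ≠ k + 1 := by have := j.isLt; omega
        simp [hM', hT, hjne, hjk, hl]
      have h2 : M' i (Fin.last (k + 1)) * T (Fin.last (k + 1)) l
          = y i - L.eval (x i) := by
        rw [hlast]; simp [hM', hT]
      rw [Finset.sum_congr rfl fun j _ => h1 j, h2]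
      have hsum : ∑ j : Fin (k + 1), x i ^ (j : ℕ) * L.coeff j = L.eval (x i) := by
        rw [heval, Finset.sum_range fun j => L.coeff j * x i ^ j]
        exact Finset.sum_congr rfl fun j _ => mul_comm _ _
      rw [hsum]
      simp [hM, hf, hl]
      rfl
    · have : ∀ j : Fin (k + 2), M' i j * T j l = if j = l then x i ^ (l : ℕ) else 0 := by
        intro j
        by_cases hj : j = l
        · subst hj; simp [hM', hT, hl]
        · simp [hM', hT, hj, hl]
      rw [Finset.sum_congr rfl fun j _ => this j, Finset.sum_ite_eq' Finset.univ l _]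
      simp [hM, hf, hl]
      rfl
  -- compute det M'
  set d : ℝ := y (Fin.last (k + 1)) - L.eval (x (Fin.last (k + 1))) with hd
  set V : ℝ := (Matrix.vandermonde fun i : Fin (k + 1) => x i.castSucc).det with hV
  have hM'det : M'.det = V * d := by
    let e : Fin (k + 1) ⊕ Fin 1 ≃ Fin (k + 2) := finSumFinEquiv
    rw [← Matrix.det_submatrix_equiv_self e M']
    have : M'.submatrix e e = Matrix.fromBlocks
        (Matrix.vandermonde fun i : Fin (k + 1) => x i.castSucc) 0
        (Matrix.of fun _ j : _ => x (Fin.last (k + 1)) ^ (j : ℕ))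
        (Matrix.of fun _ _ : Fin 1 => d) := by
      ext i j
      have heinl : ∀ a : Fin (k + 1), e (Sum.inl a) = a.castSucc := by
        intro a; apply Fin.ext; simp [e]
      have heinr : ∀ a : Fin 1, e (Sum.inr a) = Fin.last (k + 1) := by
        intro a
        have ha : a = 0 := Subsingleton.elim a 0
        subst ha; apply Fin.ext; simp [e, Fin.last]
      cases i with
      | inl a =>
        cases j with
        | inl b =>
          have hb : (b : ℕ) ≠ k + 1 := by have := b.isLt; omega
          simp [hM', heinl, hb, Matrix.vandermonde]
        | inr b =>
          simp [hM', heinl, heinr, hnode a]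
      | inr a =>
        cases j with
        | inl b =>
          have hb : (b : ℕ) ≠ k + 1 := by have := b.isLt; omega
          simp [hM', heinl, heinr, hb]
        | inr b =>
          simp [hM', heinr, hd]
    rw [this, Matrix.det_fromBlocks_zero₁₂]
    congr 1
    simp [Matrix.det_fin_one]
  have hVpos : 0 < V := by
    rw [hV, Matrix.det_vandermonde]
    refine Finset.prod_pos fun i _ => Finset.prod_pos fun j hj => ?_
    rw [sub_pos]
    exact hp (Finset.mem_Ioi.mp hj)
  have hMdet : M.det = d * V := by
    rw [hMM, Matrix.det_mul, hTdet, mul_one, hM'det, mul_comm]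
  show Real.sign d = Real.sign M.det
  rw [hMdet]
  rcases lt_trichotomy d 0 with h | h | h
  · rw [Real.sign_of_neg h, Real.sign_of_neg (mul_neg_of_neg_of_pos h hVpos)]
  · rw [h, zero_mul]
  · rw [Real.sign_of_pos h, Real.sign_of_pos (mul_pos h hVpos)]
end

section
/- Fix an integer k ≥ 1. Let x_1 < x_2 < … < x_{k+2} be reals and y_1, …, y_{k+2} ∈ ℝ. Let L₁ be the Lagrange interpolation polynomial of (x_i, y_i) for i = 1, …, k+1, and let L₂ be the Lagrange interpolation polynomial of (x_i, y_i) for i = 2, …, k+2. If y_{k+2} > L₁(x_{k+2}), then L₂(x) > L₁(x) for every real x > x_{k+1}. -/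
open Polynomial

/-- For reals `x₁ < … < x_{k+2}` and `y₁,…,y_{k+2}`, with `L₁` the Lagrange interpolation
polynomial of the first `k+1` data points and `L₂` that of the last `k+1` data points:
if `y_{k+2} > L₁(x_{k+2})` then `L₂(t) > L₁(t)` for all `t > x_{k+1}`. -/
theorem lagrange_shift_above (k : ℕ) (hk : 1 ≤ k)
    (x y : Fin (k + 2) → ℝ) (hx : StrictMono x)
    (L₁ L₂ : Polynomial ℝ)
    (hL₁ : L₁ = Lagrange.interpolate (Finset.univ : Finset (Fin (k + 1)))
        (fun i => x i.castSucc) (fun i => y i.castSucc))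
    (hL₂ : L₂ = Lagrange.interpolate (Finset.univ : Finset (Fin (k + 1)))
        (fun i => x i.succ) (fun i => y i.succ))
    (hy : y (Fin.last (k + 1)) > L₁.eval (x (Fin.last (k + 1)))) :
    ∀ t : ℝ, x ⟨k, by omega⟩ < t → L₂.eval t > L₁.eval t := by
  intro t ht
  have hinj1 : Set.InjOn (fun i : Fin (k+1) => x i.castSucc)
      (Finset.univ : Finset (Fin (k+1))) :=
    ((hx.injective.comp (Fin.castSucc_injective _)).injOn)
  have hinj2 : Set.InjOn (fun i : Fin (k+1) => x i.succ)
      (Finset.univ : Finset (Fin (k+1))) :=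
    ((hx.injective.comp (Fin.succ_injective _)).injOn)
  set m : Fin (k+2) := Fin.last (k+1) with hm
  set P : Polynomial ℝ := ∏ i : Fin k, (X - C (x i.succ.castSucc)) with hP
  have hPeval : ∀ s : ℝ, P.eval s = ∏ i : Fin k, (s - x i.succ.castSucc) := by
    intro s; simp [hP, eval_prod]
  have hle : ∀ i : Fin k, (i.succ.castSucc : Fin (k+2)) ≤ ⟨k, by omega⟩ := by
    intro i
    have : (i : ℕ) + 1 ≤ k := i.2
    simpa [Fin.le_def] using this
  have hPt : 0 < P.eval t := by
    rw [hPeval]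
    apply Finset.prod_pos
    intro i _
    have : x i.succ.castSucc ≤ x ⟨k, by omega⟩ := hx.monotone (hle i)
    linarith
  have hPm : 0 < P.eval (x m) := by
    rw [hPeval]
    apply Finset.prod_pos
    intro i _
    have hlt : (i.succ.castSucc : Fin (k+2)) < m := by
      have : (i : ℕ) + 1 < k + 1 := by omega
      simpa [Fin.lt_def, hm] using this
    have := hx hlt
    linarith
  have hL2m : L₂.eval (x m) = y m := by
    rw [hL₂]
    have := Lagrange.eval_interpolate_at_node (fun i : Fin (k+1) => y i.succ) hinj2
      (Finset.mem_univ (Fin.last k))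
    simpa [Fin.succ_last, hm] using this
  have hDm : 0 < L₂.eval (x m) - L₁.eval (x m) := by rw [hL2m]; linarith [hy]
  set c : ℝ := (L₂.eval (x m) - L₁.eval (x m)) / P.eval (x m) with hc
  have hcpos : 0 < c := div_pos hDm hPm
  have hdegP : P.degree = (k : WithBot ℕ) := by
    rw [hP, degree_prod]
    simp [degree_X_sub_C]
  have key : L₂ - L₁ = C c * P := by
    apply Polynomial.eq_of_degrees_lt_of_eval_index_eq
      (Finset.univ : Finset (Fin (k+1))) hinj2
    · have h2 : L₂.degree < (k+1 : ℕ) := by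
        rw [hL₂]
        simpa using Lagrange.degree_interpolate_lt _ hinj2
      have h1 : L₁.degree < (k+1 : ℕ) := by
        rw [hL₁]
        simpa using Lagrange.degree_interpolate_lt _ hinj1
      calc (L₂ - L₁).degree ≤ max L₂.degree L₁.degree := degree_sub_le _ _
        _ < (k+1 : ℕ) := max_lt h2 h1
        _ ≤ _ := by simp
    · calc (C c * P).degree ≤ (C c).degree + P.degree := degree_mul_le _ _
        _ ≤ 0 + (k : WithBot ℕ) := add_le_add degree_C_le (le_of_eq hdegP)
        _ = (k : WithBot ℕ) := by simp
        _ < _ := by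
            rw [Finset.card_univ, Fintype.card_fin]
            exact_mod_cast Nat.lt_succ_self k
    · intro i _
      refine Fin.lastCases ?_ ?_ i
      · have : x ((Fin.last k).succ) = x m := by rw [Fin.succ_last]
        rw [eval_sub, this, hc]
        rw [eval_mul, eval_C, div_mul_cancel₀ _ hPm.ne']
      · intro j
        have hnode : (j.castSucc.succ : Fin (k+2)) = j.succ.castSucc := by
          rw [Fin.succ_castSucc]
        have e2 : L₂.eval (x j.castSucc.succ) = y j.castSucc.succ := by
          rw [hL₂]
          exact Lagrange.eval_interpolate_at_node (fun i : Fin (k+1) => y i.succ) hinj2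
            (Finset.mem_univ j.castSucc)
        have e1 : L₁.eval (x j.castSucc.succ) = y j.castSucc.succ := by
          rw [hL₁, hnode]
          have := Lagrange.eval_interpolate_at_node (fun i : Fin (k+1) => y i.castSucc) hinj1
            (Finset.mem_univ j.succ)
          simpa using this
        have eP : P.eval (x j.castSucc.succ) = 0 := by
          rw [hPeval, hnode]
          exact Finset.prod_eq_zero (Finset.mem_univ j) (by ring)
        simp [eval_sub, e1, e2, eP]
  have := congrArg (Polynomial.eval t) key
  rw [eval_sub, eval_mul, eval_C] at this
  nlinarith [mul_pos hcpos hPt]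
end

section
/- Fix an integer k ≥ 1. Let x_1 < x_2 < … < x_{k+2} be reals and y_1, …, y_{k+2} ∈ ℝ. Let L_A be the Lagrange interpolation polynomial of (x_i, y_i) for i = 1, …, k+1, and for a fixed i₀ ∈ {1, …, k+1}, let L_B be the Lagrange interpolation polynomial of (x_i, y_i) for i ∈ {1, …, k+2} \ {i₀}. Then sign(y_{k+2} − L_A(x_{k+2})) = (−1)^{k−i₀} · sign(y_{i₀} − L_B(x_{i₀})). -/
open Polynomial Finset

private lemma real_sign_mul_of_pos {c P : ℝ} (hP : 0 < P) :
    Real.sign (c * P) = Real.sign c := by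
  rcases lt_trichotomy c 0 with h | h | h
  · rw [Real.sign_of_neg h, Real.sign_of_neg (mul_neg_of_neg_of_pos h hP)]
  · simp [h, Real.sign_zero]
  · rw [Real.sign_of_pos h, Real.sign_of_pos (mul_pos h hP)]

private lemma real_sign_neg_one_pow_mul (m : ℕ) (z : ℝ) :
    Real.sign ((-1 : ℝ) ^ m * z) = (-1 : ℝ) ^ m * Real.sign z := by
  rcases Nat.even_or_odd m with h | h
  · simp [h.neg_one_pow]
  · simp [h.neg_one_pow, Real.sign_neg]

/-- Key identity: removing point `i` from the full node set, the defect at `x i` equals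
the top coefficient of the full interpolant times the nodal product. -/
private lemma key_defect (k : ℕ) (x y : Fin (k + 2) → ℝ) (hx : StrictMono x)
    (i : Fin (k + 2)) :
    y i - (Lagrange.interpolate ((Finset.univ : Finset (Fin (k + 2))).erase i) x y).eval (x i)
      = (Lagrange.interpolate (Finset.univ : Finset (Fin (k + 2))) x y).coeff (k + 1) *
          ∏ j ∈ (Finset.univ : Finset (Fin (k + 2))).erase i, (x i - x j) := by
  have hinj : Function.Injective x := hx.injective
  set L := Lagrange.interpolate (Finset.univ : Finset (Fin (k + 2))) x y with hL
  set c := L.coeff (k + 1) with hc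
  set S := (Finset.univ : Finset (Fin (k + 2))).erase i with hSdef
  have hScard : #S = k + 1 := by
    rw [hSdef, Finset.card_erase_of_mem (Finset.mem_univ i)]
    simp
  have hinjS : Set.InjOn x S := hinj.injOn
  have hinjU : Set.InjOn x (Finset.univ : Finset (Fin (k + 2))) := hinj.injOn
  have hLdeg : L.degree < (k + 2 : ℕ) := by
    have := Lagrange.degree_interpolate_lt (r := y) hinjU
    simpa [hL] using this
  have hnodal : (Lagrange.nodal S x).natDegree = k + 1 := by
    rw [Lagrange.natDegree_nodal, hScard]
  -- interpolate S x y = L - C c * nodal S x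
  have hkey : Lagrange.interpolate S x y = L - C c * Lagrange.nodal S x := by
    symm
    apply Lagrange.eq_interpolate_of_eval_eq y hinjS
    · rw [hScard]
      rw [Polynomial.degree_lt_iff_coeff_zero]
      intro m hm
      have hm' : (k + 1 : ℕ) ≤ m := by exact_mod_cast hm
      rcases eq_or_lt_of_le hm' with h | h
      · rw [Polynomial.coeff_sub, Polynomial.coeff_C_mul, ← h]
        have : (Lagrange.nodal S x).coeff (k + 1) = 1 := by
          have := (Lagrange.nodal_monic (s := S) (v := x)).coeff_natDegree
          rwa [hnodal] at this
        rw [this, mul_one, ← hc, sub_self]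
      · have h2 : (k + 2 : ℕ) ≤ m := h
        rw [Polynomial.coeff_sub, Polynomial.coeff_C_mul]
        have hL0 : L.coeff m = 0 := by
          apply Polynomial.coeff_eq_zero_of_degree_lt
          exact lt_of_lt_of_le hLdeg (by exact_mod_cast h2)
        have hn0 : (Lagrange.nodal S x).coeff m = 0 := by
          apply Polynomial.coeff_eq_zero_of_natDegree_lt
          omega
        rw [hL0, hn0, mul_zero, sub_self]
    · intro j hj
      rw [Polynomial.eval_sub, Polynomial.eval_mul, Polynomial.eval_C,
        Lagrange.eval_nodal_at_node hj, mul_zero, sub_zero, hL,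
        Lagrange.eval_interpolate_at_node y hinjU (Finset.mem_univ j)]
  rw [hkey]
  have hLi : L.eval (x i) = y i :=
    Lagrange.eval_interpolate_at_node y hinjU (Finset.mem_univ i)
  rw [Polynomial.eval_sub, Polynomial.eval_mul, Polynomial.eval_C, hLi,
    Lagrange.eval_nodal]
  ring

/-- For reals `x₁ < … < x_{k+2}` and `y₁,…,y_{k+2}`, let `L_A` be the Lagrange interpolation
polynomial of the data points with indices `1,…,k+1`, and for `i₀ ∈ {1,…,k+1}` let `L_B` be that
of the data points with indices `{1,…,k+2} \ {i₀}`.  Then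
`sign(y_{k+2} − L_A(x_{k+2})) = (−1)^{k−i₀} · sign(y_{i₀} − L_B(x_{i₀}))`.
Here `i₀` is encoded as `i0 : Fin (k+1)`, whose 1-based value is `(i0 : ℕ) + 1`. -/
theorem sign_defect_omit (k : ℕ) (hk : 1 ≤ k)
    (x y : Fin (k + 2) → ℝ) (hx : StrictMono x)
    (i0 : Fin (k + 1))
    (LA LB : Polynomial ℝ)
    (hLA : LA = Lagrange.interpolate
        ((Finset.univ : Finset (Fin (k + 2))).erase (Fin.last (k + 1))) x y)
    (hLB : LB = Lagrange.interpolate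
        ((Finset.univ : Finset (Fin (k + 2))).erase i0.castSucc) x y) :
    Real.sign (y (Fin.last (k + 1)) - LA.eval (x (Fin.last (k + 1)))) =
      (-1 : ℝ) ^ ((k : ℤ) - ((i0 : ℕ) + 1)) *
        Real.sign (y i0.castSucc - LB.eval (x i0.castSucc)) := by
  set c := (Lagrange.interpolate (Finset.univ : Finset (Fin (k + 2))) x y).coeff (k + 1)
    with hc
  -- LHS
  have hA := key_defect k x y hx (Fin.last (k + 1))
  have hPA : 0 < ∏ j ∈ (Finset.univ : Finset (Fin (k + 2))).erase (Fin.last (k + 1)),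
      (x (Fin.last (k + 1)) - x j) := by
    apply Finset.prod_pos
    intro j hj
    have hjne : j ≠ Fin.last (k + 1) := (Finset.mem_erase.mp hj).1
    have : j < Fin.last (k + 1) := lt_of_le_of_ne (Fin.le_last j) hjne
    exact sub_pos.mpr (hx this)
  have hLHS : Real.sign (y (Fin.last (k + 1)) - LA.eval (x (Fin.last (k + 1))))
      = Real.sign c := by
    rw [hLA, hA, real_sign_mul_of_pos hPA]
  -- RHS product decomposition
  set i' := i0.castSucc with hi'
  have hB := key_defect k x y hx i'
  have hsplit : (Finset.univ : Finset (Fin (k + 2))).erase i'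
      = Finset.Iio i' ∪ Finset.Ioi i' := by
    ext j
    simp only [Finset.mem_erase, Finset.mem_univ, and_true, Finset.mem_union,
      Finset.mem_Iio, Finset.mem_Ioi]
    exact ne_iff_lt_or_gt
  have hdisj : Disjoint (Finset.Iio i') (Finset.Ioi i') := by
    rw [Finset.disjoint_left]
    intro j hj1 hj2
    exact absurd (Finset.mem_Iio.mp hj1) (not_lt.mpr (le_of_lt (Finset.mem_Ioi.mp hj2)))
  have hprod : ∏ j ∈ (Finset.univ : Finset (Fin (k + 2))).erase i', (x i' - x j)
      = (∏ j ∈ Finset.Iio i', (x i' - x j)) * ∏ j ∈ Finset.Ioi i', (x i' - x j) := by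
    rw [hsplit, Finset.prod_union hdisj]
  have hIoi : ∏ j ∈ Finset.Ioi i', (x i' - x j)
      = (-1 : ℝ) ^ (#(Finset.Ioi i')) * ∏ j ∈ Finset.Ioi i', (x j - x i') := by
    rw [← Finset.prod_const, ← Finset.prod_mul_distrib]
    apply Finset.prod_congr rfl
    intro j _; ring
  have hcard : #(Finset.Ioi i') = k + 1 - (i0 : ℕ) := by
    rw [Fin.card_Ioi]
    simp [hi']
  have hPos : 0 < (∏ j ∈ Finset.Iio i', (x i' - x j)) * ∏ j ∈ Finset.Ioi i', (x j - x i') := by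
    apply mul_pos
    · apply Finset.prod_pos
      intro j hj
      exact sub_pos.mpr (hx (Finset.mem_Iio.mp hj))
    · apply Finset.prod_pos
      intro j hj
      exact sub_pos.mpr (hx (Finset.mem_Ioi.mp hj))
  have hRHSsign : Real.sign (y i' - LB.eval (x i'))
      = (-1 : ℝ) ^ (k + 1 - (i0 : ℕ)) * Real.sign c := by
    rw [hLB, hB, hprod, hIoi, hcard]
    have : c * ((∏ j ∈ Finset.Iio i', (x i' - x j)) *
        ((-1 : ℝ) ^ (k + 1 - (i0 : ℕ)) * ∏ j ∈ Finset.Ioi i', (x j - x i')))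
        = (-1 : ℝ) ^ (k + 1 - (i0 : ℕ)) *
          (c * ((∏ j ∈ Finset.Iio i', (x i' - x j)) * ∏ j ∈ Finset.Ioi i', (x j - x i'))) := by
      ring
    rw [this, real_sign_neg_one_pow_mul, real_sign_mul_of_pos hPos]
  rw [hLHS, hRHSsign]
  -- now algebra with powers of -1
  have hi0le : (i0 : ℕ) ≤ k := by omega
  have hnatcast : ((k + 1 - (i0 : ℕ) : ℕ) : ℤ) = (k : ℤ) + 1 - (i0 : ℕ) := by
    omega
  rw [← mul_assoc, ← zpow_natCast (-1 : ℝ) (k + 1 - (i0 : ℕ)), ← zpow_add₀ (by norm_num : (-1:ℝ) ≠ 0),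
    hnatcast]
  have : (k : ℤ) - ((i0 : ℕ) + 1) + ((k : ℤ) + 1 - (i0 : ℕ)) = 2 * ((k : ℤ) - (i0 : ℕ)) := by
    ring
  rw [this]
  have heven : Even (2 * ((k : ℤ) - (i0 : ℕ))) := even_two_mul _
  rw [heven.neg_one_zpow, one_mul]
end

section
/- Fix an integer k ≥ 1. Let p_1, …, p_{k+3} be points in ℝ² with coordinates p_i = (x_i, y_i) and x_1 < x_2 < … < x_{k+3}, and let f : ℝ² → ℝ^{k+2} be the map f(x, y) = (1, x, x², …, x^k, y). For j = 1, …, k+3, let D_j denote the determinant of the (k+2)×(k+2) matrix whose rows are f(p_i) for i ∈ {1, …, k+3} \ {j}, listed in increasing order of i. If sign(D_{k+3}) = sign(D_1), then sign(D_j) = sign(D_1) for every j = 1, …, k+3. -/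
open Matrix Polynomial

namespace SignDetAux

/-- Base matrix: transposed Vandermonde on the nodes omitting `j`. -/
noncomputable def bmat (k : ℕ) (x : Fin (k+3) → ℝ) (j : Fin (k+3)) :
    Matrix (Fin (k+2)) (Fin (k+2)) ℝ :=
  Matrix.of fun r c : Fin (k+2) => x (j.succAbove c) ^ (r : ℕ)

/-- The determinant, as a linear functional of the `y`-data. -/
noncomputable def phi (k : ℕ) (x : Fin (k+3) → ℝ) (j : Fin (k+3)) :
    (Fin (k+3) → ℝ) →ₗ[ℝ] ℝ where
  toFun y := ((bmat k x j).updateRow (Fin.last (k+1)) fun c => y (j.succAbove c)).det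
  map_add' y z := by
    rw [show (fun c => (y + z) (j.succAbove c))
        = (fun c => y (j.succAbove c)) + fun c => z (j.succAbove c) from rfl,
      Matrix.det_updateRow_add]
  map_smul' a y := by
    rw [show (fun c => (a • y) (j.succAbove c))
        = a • fun c => y (j.succAbove c) from rfl,
      Matrix.det_updateRow_smul]
    rfl

lemma phi_congr (k : ℕ) (x : Fin (k+3) → ℝ) (j : Fin (k+3)) (y y' : Fin (k+3) → ℝ)
    (h : ∀ c : Fin (k+2), y (j.succAbove c) = y' (j.succAbove c)) :
    phi k x j y = phi k x j y' := by
  simp only [phi, LinearMap.coe_mk, AddHom.coe_mk]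
  have : (fun c => y (j.succAbove c)) = fun c => y' (j.succAbove c) := funext h
  rw [this]

lemma phi_pow_le (k : ℕ) (x : Fin (k+3) → ℝ) (j : Fin (k+3)) (m : ℕ) (hm : m ≤ k) :
    phi k x j (fun i => x i ^ m) = 0 := by
  simp only [phi, LinearMap.coe_mk, AddHom.coe_mk]
  apply Matrix.det_zero_of_row_eq (i := (⟨m, by omega⟩ : Fin (k+2))) (j := Fin.last (k+1))
  · intro hcon
    have := congrArg Fin.val hcon
    simp [Fin.val_last] at this
    omega
  · funext c
    rw [Matrix.updateRow_ne, Matrix.updateRow_self]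
    · simp [bmat]
    · intro hcon
      have := congrArg Fin.val hcon
      simp [Fin.val_last] at this
      omega

lemma phi_pow_top (k : ℕ) (x : Fin (k+3) → ℝ) (j : Fin (k+3)) :
    phi k x j (fun i => x i ^ (k+1)) = (bmat k x j).det := by
  simp only [phi, LinearMap.coe_mk, AddHom.coe_mk]
  congr 1
  have : (fun c => x (j.succAbove c) ^ (k+1)) = bmat k x j (Fin.last (k+1)) := by
    funext c; simp [bmat, Fin.val_last]
  rw [this, Matrix.updateRow_eq_self]

lemma bmat_det_pos (k : ℕ) (x : Fin (k+3) → ℝ) (hx : StrictMono x) (j : Fin (k+3)) :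
    0 < (bmat k x j).det := by
  have : bmat k x j = (Matrix.vandermonde (x ∘ j.succAbove))ᵀ := by
    ext r c; simp [bmat, Matrix.vandermonde]
  rw [this, Matrix.det_transpose, Matrix.det_vandermonde]
  apply Finset.prod_pos
  intro i _
  apply Finset.prod_pos
  intro l hl
  have : i < l := Finset.mem_Ioi.mp hl
  have := hx (Fin.strictMono_succAbove j this)
  simpa [sub_pos] using this

lemma phi_pow_succ (k : ℕ) (x : Fin (k+3) → ℝ) (j : Fin (k+3)) :
    phi k x j (fun i => x i ^ (k+2))
      = (∑ c : Fin (k+2), x (j.succAbove c)) * (bmat k x j).det := by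
  set s : ℝ := ∑ c : Fin (k+2), x (j.succAbove c) with hs
  set P : Polynomial ℝ := ∏ c : Fin (k+2), (X - C (x (j.succAbove c))) with hP
  have hPmonic : P.Monic := monic_prod_of_monic _ _ fun c _ => monic_X_sub_C _
  have hPdeg : P.natDegree = k + 2 := by
    rw [hP, Polynomial.natDegree_prod _ _ (fun c _ => X_sub_C_ne_zero _)]
    simp [Polynomial.natDegree_X_sub_C]
  have hPnext : P.coeff (k+1) = -s := by
    have h1 := Polynomial.prod_X_sub_C_nextCoeff (s := (Finset.univ : Finset (Fin (k+2))))
      (fun c => x (j.succAbove c))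
    rw [Polynomial.nextCoeff_of_natDegree_pos (by rw [← hP] at *; omega)] at h1
    rw [← hP] at h1
    rw [hPdeg] at h1
    simpa [hs] using h1
  set Q : Polynomial ℝ := X ^ (k+2) - P with hQ
  have hQdeg : Q.natDegree < k + 2 := by
    rcases eq_or_ne Q 0 with h0 | h0
    · simp [h0]
    · rw [Polynomial.natDegree_lt_iff_degree_lt h0]
      have : Q.degree < (X ^ (k+2) : Polynomial ℝ).degree := by
        apply Polynomial.degree_sub_lt
        · rw [Polynomial.degree_X_pow, Polynomial.degree_eq_natDegree hPmonic.ne_zero, hPdeg]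
        · exact pow_ne_zero _ Polynomial.X_ne_zero
        · simp [hPmonic.leadingCoeff]
      simpa using this
  have hQcoeff : Q.coeff (k+1) = s := by
    rw [hQ, Polynomial.coeff_sub, Polynomial.coeff_X_pow, hPnext]
    simp
  have hQeval : ∀ c : Fin (k+2), Q.eval (x (j.succAbove c)) = x (j.succAbove c) ^ (k+2) := by
    intro c
    have : P.eval (x (j.succAbove c)) = 0 := by
      rw [hP, Polynomial.eval_prod]
      apply Finset.prod_eq_zero (Finset.mem_univ c)
      simp
    rw [hQ]; simp [this]
  have key : phi k x j (fun i => x i ^ (k+2)) = phi k x j (fun i => Q.eval (x i)) :=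
    phi_congr k x j _ _ fun c => (hQeval c).symm
  rw [key]
  have hrep : (fun i => Q.eval (x i))
      = ∑ m ∈ Finset.range (k+2), Q.coeff m • (fun i : Fin (k+3) => x i ^ m) := by
    funext i
    rw [Polynomial.eval_eq_sum_range' hQdeg]
    simp [Finset.sum_apply, smul_eq_mul]
  rw [hrep, map_sum, Finset.sum_range_succ]
  have h1 : ∀ m ∈ Finset.range (k+1), phi k x j (Q.coeff m • fun i : Fin (k+3) => x i ^ m) = 0 := by
    intro m hm
    rw [LinearMap.map_smul, phi_pow_le k x j m (by simpa using Nat.lt_succ_iff.mp (Finset.mem_range.mp hm))]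
    simp
  rw [Finset.sum_eq_zero h1, LinearMap.map_smul, phi_pow_top, hQcoeff]
  simp [smul_eq_mul]

lemma linear_ext (n : ℕ) (x : Fin n → ℝ) (hx : Function.Injective x)
    (L1 L2 : (Fin n → ℝ) →ₗ[ℝ] ℝ)
    (h : ∀ m : Fin n, L1 (fun i => x i ^ (m : ℕ)) = L2 (fun i => x i ^ (m : ℕ))) :
    L1 = L2 := by
  have hdet : IsUnit (Matrix.vandermonde x).det := by
    rw [Matrix.det_vandermonde]
    refine (Finset.prod_ne_zero_iff.mpr fun i _ => Finset.prod_ne_zero_iff.mpr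
      fun l hl => sub_ne_zero.mpr fun e => ?_).isUnit
    exact (Finset.mem_Ioi.mp hl).ne' (hx e)
  refine LinearMap.ext fun y => ?_
  set V := Matrix.vandermonde x with hV
  set c := V⁻¹.mulVec y with hc
  have hy : y = ∑ m : Fin n, c m • fun i => x i ^ (m : ℕ) := by
    have h1 : V.mulVec c = y := by
      rw [hc, Matrix.mulVec_mulVec, Matrix.mul_nonsing_inv _ hdet, Matrix.one_mulVec]
    funext i
    rw [← h1]
    simp [Matrix.mulVec, dotProduct, hV, Matrix.vandermonde, Finset.sum_apply,
      mul_comm]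
  rw [hy, map_sum, map_sum]
  exact Finset.sum_congr rfl fun m _ => by rw [LinearMap.map_smul, LinearMap.map_smul, h m]

lemma key_identity (k : ℕ) (x : Fin (k+3) → ℝ) (hx : StrictMono x) (j : Fin (k+3))
    (y : Fin (k+3) → ℝ) :
    (x (Fin.last (k+2)) - x 0) * ((bmat k x 0).det * (bmat k x (Fin.last (k+2))).det)
        * phi k x j y
      = (x (Fin.last (k+2)) - x j) * ((bmat k x j).det * (bmat k x (Fin.last (k+2))).det)
          * phi k x 0 y
        + (x j - x 0) * ((bmat k x j).det * (bmat k x 0).det)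
          * phi k x (Fin.last (k+2)) y := by
  set L : Fin (k+3) := Fin.last (k+2) with hL
  have hS : ∀ a : Fin (k+3), ∑ c : Fin (k+2), x (a.succAbove c) = (∑ i, x i) - x a := by
    intro a
    rw [Fin.sum_univ_succAbove x a]
    ring
  have main : ((x L - x 0) * ((bmat k x 0).det * (bmat k x L).det)) • phi k x j
      = ((x L - x j) * ((bmat k x j).det * (bmat k x L).det)) • phi k x 0
        + ((x j - x 0) * ((bmat k x j).det * (bmat k x 0).det)) • phi k x L := by
    apply linear_ext (k+3) x hx.injective
    intro m
    simp only [LinearMap.add_apply, LinearMap.smul_apply, smul_eq_mul]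
    rcases lt_trichotomy (m : ℕ) (k+1) with hm | hm | hm
    · rw [phi_pow_le k x j _ (by omega), phi_pow_le k x 0 _ (by omega),
        phi_pow_le k x L _ (by omega)]
      ring
    · rw [show ((fun i => x i ^ (m : ℕ)) : Fin (k+3) → ℝ) = fun i => x i ^ (k+1) by
        rw [hm]]
      rw [phi_pow_top, phi_pow_top, phi_pow_top]
      ring
    · have hm2 : (m : ℕ) = k + 2 := by omega
      rw [show ((fun i => x i ^ (m : ℕ)) : Fin (k+3) → ℝ) = fun i => x i ^ (k+2) by
        rw [hm2]]
      rw [phi_pow_succ, phi_pow_succ, phi_pow_succ, hS, hS, hS]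
      ring
  have := congrArg (fun F : (Fin (k+3) → ℝ) →ₗ[ℝ] ℝ => F y) main
  simpa only [LinearMap.add_apply, LinearMap.smul_apply, smul_eq_mul, mul_assoc] using this

end SignDetAux

/-- (Transitivity.)  For points `p₁,…,p_{k+3}` in `ℝ²` with strictly increasing `x`-coordinates
and `f(x,y) = (1, x, …, x^k, y)`, let `D_j` be the determinant of the matrix with rows `f(pᵢ)`,
`i ≠ j`, in increasing order of `i`.  If `sign(D_{k+3}) = sign(D₁)`, then `sign(D_j) = sign(D₁)`
for every `j`. -/
theorem sign_det_transitivity (k : ℕ) (hk : 1 ≤ k)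
    (p : Fin (k + 3) → ℝ × ℝ) (hp : StrictMono fun i => (p i).1)
    (f : ℝ × ℝ → Fin (k + 2) → ℝ)
    (hf : ∀ q : ℝ × ℝ, ∀ j : Fin (k + 2),
      f q j = if (j : ℕ) = k + 1 then q.2 else q.1 ^ (j : ℕ))
    (D : Fin (k + 3) → ℝ)
    (hD : ∀ j : Fin (k + 3),
      D j = Matrix.det (Matrix.of fun i : Fin (k + 2) => f (p (j.succAbove i))))
    (h : Real.sign (D (Fin.last (k + 2))) = Real.sign (D 0)) :
    ∀ j : Fin (k + 3), Real.sign (D j) = Real.sign (D 0) := by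
  intro j
  set x : Fin (k+3) → ℝ := fun i => (p i).1 with hxdef
  set Y : Fin (k+3) → ℝ := fun i => (p i).2 with hYdef
  have hx : StrictMono x := hp
  -- D equals phi applied to Y
  have hDphi : ∀ a : Fin (k+3), D a = SignDetAux.phi k x a Y := by
    intro a
    rw [hD a, ← Matrix.det_transpose]
    simp only [SignDetAux.phi, LinearMap.coe_mk, AddHom.coe_mk]
    congr 1
    ext r c
    rw [Matrix.transpose_apply, Matrix.of_apply, hf]
    rw [Matrix.updateRow_apply]
    by_cases hr : r = Fin.last (k+1)
    · subst hr
      simp [Fin.val_last, hYdef]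
    · have : (r : ℕ) ≠ k + 1 := by
        intro hcon
        exact hr (Fin.ext (by simpa [Fin.val_last] using hcon))
      simp [hr, this, SignDetAux.bmat, hxdef]
  set L : Fin (k+3) := Fin.last (k+2) with hL
  have hkey := SignDetAux.key_identity k x hx j Y
  rw [← hDphi j, ← hDphi 0, ← hDphi L] at hkey
  set B0 : ℝ := (SignDetAux.bmat k x 0).det with hB0
  set Bj : ℝ := (SignDetAux.bmat k x j).det with hBj
  set BL : ℝ := (SignDetAux.bmat k x L).det with hBL
  have hB0p : 0 < B0 := SignDetAux.bmat_det_pos k x hx 0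
  have hBjp : 0 < Bj := SignDetAux.bmat_det_pos k x hx j
  have hBLp : 0 < BL := SignDetAux.bmat_det_pos k x hx L
  have hx0j : x 0 ≤ x j := hx.monotone (Fin.zero_le j)
  have hxjL : x j ≤ x L := hx.monotone (Fin.le_last j)
  have hx0L : x 0 < x L := hx (by
    rw [hL, Fin.lt_iff_val_lt_val]
    simp)
  set c0 : ℝ := (x L - x 0) * (B0 * BL) with hc0
  set a : ℝ := (x L - x j) * (Bj * BL) with ha
  set b : ℝ := (x j - x 0) * (Bj * B0) with hb
  have hc0p : 0 < c0 := by
    apply mul_pos (by linarith) (mul_pos hB0p hBLp)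
  have hap : 0 ≤ a := mul_nonneg (by linarith) (le_of_lt (mul_pos hBjp hBLp))
  have hbp : 0 ≤ b := mul_nonneg (by linarith) (le_of_lt (mul_pos hBjp hB0p))
  have habp : 0 < a + b := by
    rcases lt_or_ge (x j) (x L) with hlt | hle
    · have : 0 < a := mul_pos (by linarith) (mul_pos hBjp hBLp)
      linarith
    · have : 0 < b := mul_pos (by linarith) (mul_pos hBjp hB0p)
      linarith
  have heq : c0 * D j = a * D 0 + b * D L := hkey
  rcases lt_trichotomy (D 0) 0 with hD0 | hD0 | hD0
  · have hs0 : Real.sign (D 0) = -1 := Real.sign_of_neg hD0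
    have hDL : D L < 0 := by
      rcases lt_trichotomy (D L) 0 with h' | h' | h'
      · exact h'
      · rw [h', Real.sign_zero, hs0] at h; norm_num at h
      · rw [Real.sign_of_pos h', hs0] at h; norm_num at h
    have hsum : a * D 0 + b * D L < 0 := by
      rcases (lt_or_eq_of_le hap) with ha' | ha'
      · have h1 : a * D 0 < 0 := mul_neg_of_pos_of_neg ha' hD0
        have h2 : b * D L ≤ 0 := mul_nonpos_of_nonneg_of_nonpos hbp hDL.le
        linarith
      · have hb' : 0 < b := by linarith
        have h1 : a * D 0 = 0 := by rw [← ha', zero_mul]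
        have h2 : b * D L < 0 := mul_neg_of_pos_of_neg hb' hDL
        linarith
    have hDj : D j < 0 := by
      by_contra hcon
      push_neg at hcon
      have : 0 ≤ c0 * D j := mul_nonneg hc0p.le hcon
      linarith
    rw [Real.sign_of_neg hDj, hs0]
  · have hs0 : Real.sign (D 0) = 0 := by rw [hD0, Real.sign_zero]
    have hDL : D L = 0 := by
      have := h
      rw [hD0, Real.sign_zero] at this
      exact Real.sign_eq_zero_iff.mp this
    have hDj : D j = 0 := by
      rw [hD0, hDL] at heq
      have : c0 * D j = 0 := by linarith [heq]
      rcases mul_eq_zero.mp this with h' | h'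
      · exact absurd h' (ne_of_gt hc0p)
      · exact h'
    rw [hDj, hs0, Real.sign_zero]
  · have hs0 : Real.sign (D 0) = 1 := Real.sign_of_pos hD0
    have hDL : 0 < D L := by
      rcases lt_trichotomy (D L) 0 with h' | h' | h'
      · rw [Real.sign_of_neg h', hs0] at h; norm_num at h
      · rw [h', Real.sign_zero, hs0] at h; norm_num at h
      · exact h'
    have hsum : 0 < a * D 0 + b * D L := by
      rcases (lt_or_eq_of_le hap) with ha' | ha'
      · have h1 : 0 < a * D 0 := mul_pos ha' hD0
        have h2 : 0 ≤ b * D L := mul_nonneg hbp hDL.le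
        linarith
      · have hb' : 0 < b := by linarith
        have h1 : a * D 0 = 0 := by rw [← ha', zero_mul]
        have h2 : 0 < b * D L := mul_pos hb' hDL
        linarith
    have hDj : 0 < D j := by
      by_contra hcon
      push_neg at hcon
      have : c0 * D j ≤ 0 := mul_nonpos_of_nonneg_of_nonpos hc0p.le hcon
      linarith
    rw [Real.sign_of_pos hDj, hs0]
end

section
/- Fix an integer k ≥ 1. Let p_1, …, p_{k+3} be points in ℝ² with coordinates p_i = (x_i, y_i) and x_1 < x_2 < … < x_{k+3}, and let f : ℝ² → ℝ^{k+2} be the map f(x, y) = (1, x, x², …, x^k, y). For j = 1, …, k+3, let D_j denote the determinant of the (k+2)×(k+2) matrix whose rows are f(p_i) for i ∈ {1, …, k+3} \ {j}, listed in increasing order of i, and set s_j = sign(D_{k+4−j}) (so the sequence s_1, …, s_{k+3} corresponds to the lexicographic order of the (k+2)-element subsets of {1, …, k+3}). Then either s_j = 0 for all j, or there exist ε ∈ {+1, −1} and integers 0 ≤ a ≤ b ≤ k+3 with b − a ≤ 1 such that s_j = ε for 1 ≤ j ≤ a, s_j = 0 for a < j ≤ b, and s_j = −ε for b < j ≤ k+3.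 -/
open Finset

lemma sign_mul_pos {a : ℝ} (ha : 0 < a) (b : ℝ) :
    Real.sign (a * b) = Real.sign b := by
  rcases lt_trichotomy b 0 with hb | hb | hb
  · rw [Real.sign_of_neg hb, Real.sign_of_neg (mul_neg_of_pos_of_neg ha hb)]
  · simp [hb]
  · rw [Real.sign_of_pos hb, Real.sign_of_pos (mul_pos ha hb)]

lemma pattern_of_strictMono {n : ℕ} (t u : Fin n → ℝ) (ht : StrictMono u)
    (ε : ℝ) (hε : ε = 1 ∨ ε = -1)
    (hneg : ∀ j, u j < 0 → t j = ε) (h0 : ∀ j, u j = 0 → t j = 0)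
    (hpos : ∀ j, 0 < u j → t j = -ε) :
    ∃ ε : ℝ, (ε = 1 ∨ ε = -1) ∧
      ∃ a b : ℕ, a ≤ b ∧ b ≤ n ∧ b - a ≤ 1 ∧
        ∀ j : Fin n,
          ((j : ℕ) < a → t j = ε) ∧
          (a ≤ (j : ℕ) → (j : ℕ) < b → t j = 0) ∧
          (b ≤ (j : ℕ) → t j = -ε) := by
  refine ⟨ε, hε, #(univ.filter fun j => u j < 0), #(univ.filter fun j => u j ≤ 0), ?_, ?_, ?_, ?_⟩
  · refine card_le_card fun j hj => ?_
    simp only [mem_filter, mem_univ, true_and] at hj ⊢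
    exact le_of_lt hj
  · exact (card_filter_le _ _).trans_eq (by simp)
  · have h1 : (univ.filter fun j => u j ≤ 0) ⊆
        (univ.filter fun j => u j < 0) ∪ (univ.filter fun j => u j = 0) := by
      intro j hj
      simp only [mem_filter, mem_union, mem_univ, true_and] at hj ⊢
      rcases lt_or_eq_of_le hj with h | h
      · exact Or.inl h
      · exact Or.inr h
    have h2 : #(univ.filter fun j => u j = 0) ≤ 1 := by
      refine card_le_one.mpr fun i hi j hj => ?_
      simp only [mem_filter] at hi hj
      exact ht.injective (hi.2.trans hj.2.symm)
    have := (card_le_card h1).trans (card_union_le _ _)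
    omega
  · intro j
    have key1 : (j : ℕ) < #(univ.filter fun j => u j < 0) → u j < 0 := by
      intro hj
      by_contra h
      push_neg at h
      have hsub : (univ.filter fun i => u i < 0) ⊆ Finset.Iio j := by
        intro i hi
        simp only [mem_filter, mem_univ, true_and] at hi
        exact Finset.mem_Iio.mpr (ht.lt_iff_lt.mp (hi.trans_le h))
      have := (card_le_card hsub).trans_eq (Fin.card_Iio j)
      omega
    have key2 : u j < 0 → (j : ℕ) < #(univ.filter fun j => u j < 0) := by
      intro hj
      have hsub : Finset.Iic j ⊆ (univ.filter fun i => u i < 0) := by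
        intro i hi
        simp only [mem_filter, mem_univ, true_and]
        exact lt_of_le_of_lt (by exact_mod_cast ht.monotone (Finset.mem_Iic.mp hi)) hj
      have h2 := card_le_card hsub
      rw [Fin.card_Iic j] at h2
      omega
    have key3 : (j : ℕ) < #(univ.filter fun j => u j ≤ 0) → u j ≤ 0 := by
      intro hj
      by_contra h
      push_neg at h
      have hsub : (univ.filter fun i => u i ≤ 0) ⊆ Finset.Iio j := by
        intro i hi
        simp only [mem_filter, mem_univ, true_and] at hi
        exact Finset.mem_Iio.mpr (ht.lt_iff_lt.mp (hi.trans_lt h))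
      have := (card_le_card hsub).trans_eq (Fin.card_Iio j)
      omega
    have key4 : u j ≤ 0 → (j : ℕ) < #(univ.filter fun j => u j ≤ 0) := by
      intro hj
      have hsub : Finset.Iic j ⊆ (univ.filter fun i => u i ≤ 0) := by
        intro i hi
        simp only [mem_filter, mem_univ, true_and]
        exact le_trans (ht.monotone (Finset.mem_Iic.mp hi)) hj
      have h2 := card_le_card hsub
      rw [Fin.card_Iic j] at h2
      omega
    refine ⟨fun h => hneg j (key1 h), fun h1 h2 => ?_, fun h => ?_⟩
    · have hle := key3 h2
      have : ¬ u j < 0 := fun hlt => by have := key2 hlt; omega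
      exact h0 j (le_antisymm hle (not_lt.mp this))
    · have : ¬ u j ≤ 0 := fun hle => by have := key4 hle; omega
      exact hpos j (not_le.mp this)
open Finset Polynomial Matrix


/-- (Locally unimodal property.)  With `D_j` as the determinant omitting the `j`-th point and
`s_j = sign(D_{k+4−j})` (the lexicographic order of the `(k+2)`-subsets), the sequence
`s₁,…,s_{k+3}` is all zero, or of the form `ε,…,ε,0,…,0,−ε,…,−ε` with at most one `0`.
Here `s` is indexed by `Fin (k+3)` (0-based), so `s j = sign(D (rev j))`. -/
theorem locally_unimodal (k : ℕ) (hk : 1 ≤ k)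
    (p : Fin (k + 3) → ℝ × ℝ) (hp : StrictMono fun i => (p i).1)
    (f : ℝ × ℝ → Fin (k + 2) → ℝ)
    (hf : ∀ q : ℝ × ℝ, ∀ j : Fin (k + 2),
      f q j = if (j : ℕ) = k + 1 then q.2 else q.1 ^ (j : ℕ))
    (D : Fin (k + 3) → ℝ)
    (hD : ∀ j : Fin (k + 3),
      D j = Matrix.det (Matrix.of fun i : Fin (k + 2) => f (p (j.succAbove i))))
    (s : Fin (k + 3) → ℝ)
    (hs : ∀ j : Fin (k + 3), s j = Real.sign (D j.rev)) :
    (∀ j, s j = 0) ∨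
      ∃ ε : ℝ, (ε = 1 ∨ ε = -1) ∧
        ∃ a b : ℕ, a ≤ b ∧ b ≤ k + 3 ∧ b - a ≤ 1 ∧
          ∀ j : Fin (k + 3),
            ((j : ℕ) < a → s j = ε) ∧
            (a ≤ (j : ℕ) → (j : ℕ) < b → s j = 0) ∧
            (b ≤ (j : ℕ) → s j = -ε) := by
  set x : Fin (k + 3) → ℝ := fun i => (p i).1 with hx
  set y : Fin (k + 3) → ℝ := fun i => (p i).2 with hy
  have hxinj : Function.Injective x := hp.injective
  have hxinjOn : Set.InjOn x (univ : Finset (Fin (k + 3))) :=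
    hxinj.injOn
  set Q : ℝ[X] := Lagrange.interpolate univ x y with hQ
  set c : ℝ := Q.coeff (k + 2) with hc
  set B : ℝ := Q.coeff (k + 1) + c * ∑ i, x i with hB
  -- Main structural lemma: D j = V j * (B - c * x j) with V j > 0.
  have hDj : ∀ j : Fin (k + 3), ∃ V : ℝ, 0 < V ∧ D j = V * (B - c * x j) := by
    intro j
    set z : Fin (k + 2) → ℝ := fun i => x (j.succAbove i) with hzdef
    have hz : StrictMono z := hp.comp (Fin.strictMono_succAbove j)
    have hzinjOn : Set.InjOn z (univ : Finset (Fin (k + 2))) :=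
      hz.injective.injOn
    set w : Fin (k + 2) → ℝ := fun i => y (j.succAbove i) with hwdef
    set q : ℝ[X] := Lagrange.interpolate univ z w with hq
    have hcard2 : #(univ : Finset (Fin (k + 2))) = k + 2 := by simp
    have hcard3 : #(univ : Finset (Fin (k + 3))) = k + 3 := by simp
    have hqdeg : q.degree < (k + 2 : ℕ) := by
      have := Lagrange.degree_interpolate_lt w hzinjOn
      rwa [hcard2] at this
    have hQdeg : Q.degree < (k + 3 : ℕ) := by
      have := Lagrange.degree_interpolate_lt y hxinjOn
      rwa [hcard3] at this
    -- Step B: identify q as Q - C c * N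
    set N : ℝ[X] := ∏ i : Fin (k + 2), (X - C (z i)) with hN
    have hNmonic : N.Monic := monic_prod_of_monic _ _ fun i _ => monic_X_sub_C (z i)
    have hNdeg : N.natDegree = k + 2 := by
      rw [hN, natDegree_prod_of_monic _ _ fun i _ => monic_X_sub_C (z i)]
      simp [natDegree_X_sub_C]
    have hkey : Q - C c * N = q := by
      apply Lagrange.eq_interpolate_of_eval_eq _ hzinjOn
      · rw [hcard2]
        rw [degree_lt_iff_coeff_zero]
        intro m hm
        have hm' : k + 2 ≤ m := by exact_mod_cast hm
        rcases eq_or_lt_of_le hm' with hm2 | hm2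
        · rw [coeff_sub, coeff_C_mul, ← hm2, ← hc, ← hNdeg, hNmonic.coeff_natDegree,
            mul_one, sub_self]
        · rw [coeff_sub, coeff_C_mul,
            coeff_eq_zero_of_degree_lt (hQdeg.trans_le (by exact_mod_cast hm2)),
            coeff_eq_zero_of_natDegree_lt (by omega), mul_zero, sub_zero]
      · intro i _
        have h1 : Q.eval (z i) = w i := by
          have := Lagrange.eval_interpolate_at_node y hxinjOn
            (Finset.mem_univ (j.succAbove i))
          rw [hQ]
          exact this
        have h2 : N.eval (z i) = 0 := by
          rw [hN, eval_prod]
          exact Finset.prod_eq_zero (Finset.mem_univ i) (by simp)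
        rw [eval_sub, eval_mul, h1, h2, mul_zero, sub_zero]
    have hsum : ∑ i, z i = (∑ i, x i) - x j := by
      have := Fin.sum_univ_succAbove x j
      rw [hzdef]
      simp only at this ⊢
      linarith [this]
    have hcoeff : q.coeff (k + 1) = B - c * x j := by
      rw [← hkey, coeff_sub, coeff_C_mul]
      have hnext : N.coeff (k + 1) = -∑ i, z i := by
        have h1 := prod_X_sub_C_nextCoeff (s := (univ : Finset (Fin (k + 2)))) z
        rw [← hN] at h1
        rw [← h1, nextCoeff_of_natDegree_pos (by omega)]
        congr 1
        omega
      rw [hnext, hsum, hB]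
      ring
    -- Step A: determinant computation
    have hqnat : q.natDegree < k + 2 := by
      rcases eq_or_ne q 0 with h | h
      · simp [h]
      · exact natDegree_lt_iff_degree_lt h |>.mpr (by exact_mod_cast hqdeg)
    have hweval : ∀ i, w i = ∑ m : Fin (k + 2), q.coeff m * z i ^ (m : ℕ) := by
      intro i
      have h1 : q.eval (z i) = w i :=
        Lagrange.eval_interpolate_at_node w hzinjOn (Finset.mem_univ i)
      rw [← h1, eval_eq_sum_range' hqnat, Finset.sum_range fun m => q.coeff m * z i ^ m]
    set A : Matrix (Fin (k + 2)) (Fin (k + 2)) ℝ := (Matrix.vandermonde z)ᵀ with hA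
    have hM : (Matrix.of fun i : Fin (k + 2) => f (p (j.succAbove i)))ᵀ
        = A.updateRow (Fin.last (k + 1)) w := by
      funext l i
      rw [Matrix.transpose_apply, Matrix.of_apply, hf]
      by_cases hl : l = Fin.last (k + 1)
      · subst hl
        simp [Matrix.updateRow_apply, Fin.val_last, hwdef, hy]
      · have hlv : (l : ℕ) ≠ k + 1 := fun h => hl (Fin.ext (by simp [h, Fin.val_last]))
        simp [Matrix.updateRow_apply, hl, hlv, hA, Matrix.vandermonde, hzdef, hx]
    have hdet : D j = q.coeff (k + 1) * (Matrix.vandermonde z).det := by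
      rw [hD, ← Matrix.det_transpose, hM]
      have hwsum : w = ∑ m : Fin (k + 2), (fun m : Fin (k + 2) => q.coeff (m : ℕ)) m • A m := by
        funext i
        rw [hweval i]
        simp [Finset.sum_apply, hA, Matrix.vandermonde]
      rw [hwsum, Matrix.det_updateRow_sum A (Fin.last (k + 1))
        (fun m : Fin (k + 2) => q.coeff (m : ℕ))]
      rw [smul_eq_mul, Fin.val_last, Matrix.det_transpose]
    have hVpos : 0 < (Matrix.vandermonde z).det := by
      rw [Matrix.det_vandermonde]
      apply Finset.prod_pos
      intro i _
      apply Finset.prod_pos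
      intro i' hi'
      exact sub_pos.mpr (hz (Finset.mem_Ioi.mp hi'))
    exact ⟨(Matrix.vandermonde z).det, hVpos, by rw [hdet, hcoeff, mul_comm]⟩
  -- Now the sign analysis.
  have hsj : ∀ j : Fin (k + 3), s j = Real.sign (B - c * x j.rev) := by
    intro j
    obtain ⟨V, hV, hDV⟩ := hDj j.rev
    rw [hs, hDV, sign_mul_pos hV]
  rcases eq_or_ne c 0 with hc0 | hc0
  · rcases eq_or_ne B 0 with hB0 | hB0
    · left
      intro j
      rw [hsj, hc0, hB0]
      simp
    · right
      refine ⟨Real.sign B, ?_, k + 3, k + 3, le_refl _, le_refl _, by omega, ?_⟩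
      · rcases lt_trichotomy B 0 with h | h | h
        · exact Or.inr (Real.sign_of_neg h)
        · exact absurd h hB0
        · exact Or.inl (Real.sign_of_pos h)
      · intro j
        refine ⟨fun _ => ?_, fun h1 h2 => by omega, fun h => absurd h (by omega)⟩
        rw [hsj, hc0]
        simp
  · right
    rcases lt_or_gt_of_ne hc0 with hcneg | hcpos
    · -- c < 0 : u j := -(B - c * x j.rev) is strictly monotone, ε = 1
      apply pattern_of_strictMono s (fun j => -(B - c * x j.rev)) ?_ 1 (Or.inl rfl)
      · intro j hj
        rw [hsj, Real.sign_of_pos (by linarith [neg_neg (B - c * x j.rev)] )]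
      · intro j hj
        rw [hsj, show B - c * x j.rev = 0 by linarith, Real.sign_zero]
      · intro j hj
        rw [hsj, Real.sign_of_neg (by linarith)]
      · intro j1 j2 hj
        have : x j2.rev < x j1.rev := hp (Fin.rev_lt_rev.mpr hj)
        have : c * x j1.rev < c * x j2.rev := by nlinarith
        simp only
        linarith
    · -- c > 0 : u j := B - c * x j.rev is strictly monotone, ε = -1
      apply pattern_of_strictMono s (fun j => B - c * x j.rev) ?_ (-1) (Or.inr rfl)
      · intro j hj
        rw [hsj, Real.sign_of_neg hj]
      · intro j hj
        rw [hsj, hj, Real.sign_zero]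
      · intro j hj
        rw [hsj, Real.sign_of_pos hj]
        norm_num
      · intro j1 j2 hj
        have : x j2.rev < x j1.rev := hp (Fin.rev_lt_rev.mpr hj)
        have : c * x j2.rev < c * x j1.rev := by nlinarith
        simp only
        linarith
end
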